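/- arXiv:0910.5940 — 2 statements merged into one kernel-verified Lean document; each statement's English description precedes it below -/
import Mathlib

section
/- Let e ≥ 2 and let λ be an e-restricted partition of d. Then there exists at least one standard λ-tableau T whose residue sequence i^T equals the ladder weight j^λ. -/
namespace KN

/-- A subset of `ℤ²_{≥1}` (encoded in `ℕ × ℕ`) shaped like a Young diagram:
all coordinates are `≥ 1` and the set is closed under decreasing either coordinate
(staying `≥ 1`). -/
def IsDiagram (S : Set (ℕ × ℕ)) : Prop :=
  (∀ p ∈ S, 1 ≤ p.1 ∧ 1 ≤ p.2) ∧
  ∀ a b a' b', (a, b) ∈ S → 1 ≤ a' → a' ≤ a → 1 ≤ b' → b' ≤ b → (a', b') ∈ S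

/-- The Young diagram of a partition given as a function `l : ℕ → ℕ`
(`l r` is the `r`-th part, for `r ≥ 1`): the nodes `(a, b)` with `a, b ≥ 1`, `b ≤ l a`. -/
def cells (l : ℕ → ℕ) : Set (ℕ × ℕ) := {p | 1 ≤ p.1 ∧ 1 ≤ p.2 ∧ p.2 ≤ l p.1}

/-- `l` (indexed from `1`) is a weakly decreasing sequence of naturals, eventually zero. -/
def IsPartitionFun (l : ℕ → ℕ) : Prop :=
  (∀ r, 1 ≤ r → l (r + 1) ≤ l r) ∧ ∃ N, ∀ r, N ≤ r → l r = 0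

/-- `l` is a partition of `d`: its Young diagram has exactly `d` nodes. -/
def IsPartitionOf (l : ℕ → ℕ) (d : ℕ) : Prop :=
  IsPartitionFun l ∧ (cells l).Finite ∧ (cells l).ncard = d

/-- `λ_r - λ_{r+1} < e` for all `r ≥ 1`. -/
def IsRestricted (e : ℕ) (l : ℕ → ℕ) : Prop := ∀ r, 1 ≤ r → l r < l (r + 1) + e

/-- The `m`-th ladder `L_m = {(1 + k, m - k(e-1)) : k ≥ 0, k(e-1) < m}`. -/
def ladder (e m : ℕ) : Set (ℕ × ℕ) :=
  {p | ∃ k : ℕ, k * (e - 1) < m ∧ p = (1 + k, m - k * (e - 1))}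

/-- The residue `b - a (mod e)` of a node `(a, b)`. -/
def res (e : ℕ) (p : ℕ × ℕ) : ZMod e := (p.2 : ZMod e) - (p.1 : ZMod e)

/-- `A` is a removable node of the diagram `S`. -/
def Removable (S : Set (ℕ × ℕ)) (A : ℕ × ℕ) : Prop := A ∈ S ∧ IsDiagram (S \ {A})

/-- `B` is an addable node of the diagram `S`. -/
def Addable (S : Set (ℕ × ℕ)) (B : ℕ × ℕ) : Prop := B ∉ S ∧ IsDiagram (S ∪ {B})

/-- `σ_k` of a diagram: the number of nodes in rows `1, …, k`. -/
noncomputable def sigmaSet (S : Set (ℕ × ℕ)) (k : ℕ) : ℕ := (S ∩ {p | p.1 ≤ k}).ncard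

/-- Dominance order on diagrams: `S ⊴ T` iff `σ_k(S) ≤ σ_k(T)` for all `k`. -/
def DomLE (S T : Set (ℕ × ℕ)) : Prop := ∀ k, sigmaSet S k ≤ sigmaSet T k

/-- `R_m = r_1(λ) + ⋯ + r_m(λ)` where `r_u(λ) = |λ ∩ L_u|`. -/
noncomputable def Rlad (e : ℕ) (l : ℕ → ℕ) (m : ℕ) : ℕ :=
  ∑ u ∈ Finset.Icc 1 m, (cells l ∩ ladder e u).ncard

/-- The `s`-th entry of the ladder weight `j^λ`: it equals `m - 1 (mod e)` for the
unique `m` with `R_{m-1} < s ≤ R_m`. -/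
noncomputable def ladderWeight (e : ℕ) (l : ℕ → ℕ) (s : ℕ) : ZMod e :=
  ((sInf {m : ℕ | s ≤ Rlad e l m} - 1 : ℕ) : ZMod e)

/-- A standard tableau of shape `S` (with `|S| = d`): a bijective labelling of the
nodes of `S` by `1, …, d`, increasing along rows and columns. -/
def IsStandardTableau (S : Set (ℕ × ℕ)) (d : ℕ) (T : ℕ × ℕ → ℕ) : Prop :=
  (∀ p ∈ S, 1 ≤ T p ∧ T p ≤ d) ∧
  (∀ p ∈ S, ∀ q ∈ S, T p = T q → p = q) ∧
  (∀ s, 1 ≤ s → s ≤ d → ∃ p ∈ S, T p = s) ∧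
  (∀ a b, (a, b) ∈ S → (a, b + 1) ∈ S → T (a, b) < T (a, b + 1)) ∧
  (∀ a b, (a, b) ∈ S → (a + 1, b) ∈ S → T (a, b) < T (a + 1, b))

/-- The degree `d_A(S)` of a removable node `A` of `S`:
(number of addable nodes of `S` of the same residue strictly below `A`) minus
(number of removable nodes of `S` of the same residue strictly below `A`). -/
noncomputable def degNode (e : ℕ) (S : Set (ℕ × ℕ)) (A : ℕ × ℕ) : ℤ :=
  (({B | Addable S B ∧ res e B = res e A ∧ A.1 < B.1}).ncard : ℤ) -
  (({B | Removable S B ∧ res e B = res e A ∧ A.1 < B.1}).ncard : ℤ)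

/-- The degree of a standard tableau: `deg(T) = Σ_{s=1}^d d_{A_s}(sh(T_{≤ s}))`,
written as a sum over the nodes `p` of `S` (with `s = T p`). -/
noncomputable def degTab (e : ℕ) (S : Set (ℕ × ℕ)) (T : ℕ × ℕ → ℕ) : ℤ :=
  ∑ᶠ p ∈ S, degNode e {q | q ∈ S ∧ T q ≤ T p} p

/-- The set of standard tableaux of shape `S` (of size `d`) whose residue sequence
equals the ladder weight `j^λ` of the partition `l`; tableaux are normalized to
take the value `0` off `S`. -/
def LWTableaux (e d : ℕ) (l : ℕ → ℕ) (S : Set (ℕ × ℕ)) : Set ((ℕ × ℕ) → ℕ) :=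
  {T | IsStandardTableau S d T ∧ (∀ p, p ∉ S → T p = 0) ∧
    ∀ p ∈ S, res e p = ladderWeight e l (T p)}

/-- The quantum integer `[n]_q = q^{n-1} + q^{n-3} + ⋯ + q^{1-n} ∈ ℤ[q, q⁻¹]`. -/
noncomputable def qint (n : ℕ) : LaurentPolynomial ℤ :=
  ∑ k ∈ Finset.range n, LaurentPolynomial.T ((n : ℤ) - 1 - 2 * k)

/-- The quantum factorial `[n]_q! = [n]_q [n-1]_q ⋯ [1]_q`. -/
noncomputable def qfact (n : ℕ) : LaurentPolynomial ℤ :=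
  ∏ k ∈ Finset.Icc 1 n, qint k

/-- The ladder index of a node: `(a, b)` lies in ladder `L_{b + (a-1)(e-1)}`. -/
def lidx (e : ℕ) (p : ℕ × ℕ) : ℕ := p.2 + (p.1 - 1) * (e - 1)

/-- The lexicographic key used to order the filling: ladder index first, then row. -/
def lkey (e : ℕ) (p : ℕ × ℕ) : ℕ ×ₗ ℕ := toLex (lidx e p, p.1)

lemma mem_ladder_iff_lidx {e : ℕ} {p : ℕ × ℕ} (hp1 : 1 ≤ p.1) (hp2 : 1 ≤ p.2) (u : ℕ) :
    p ∈ ladder e u ↔ lidx e p = u := by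
  obtain ⟨a, b⟩ := p
  simp only at hp1 hp2
  constructor
  · rintro ⟨k, hk, hpe⟩
    have h1 : a = 1 + k := congrArg Prod.fst hpe
    have h2 : b = u - k * (e - 1) := congrArg Prod.snd hpe
    simp only [lidx, h1, h2]
    have : 1 + k - 1 = k := by omega
    rw [this]
    omega
  · intro h
    refine ⟨a - 1, ?_, ?_⟩
    · simp only [lidx] at h; omega
    · simp only [lidx] at h
      have h1 : 1 + (a - 1) = a := by omega
      have h2 : u - (a - 1) * (e - 1) = b := by omega
      rw [h1, h2]

lemma lkey_injOn {e : ℕ} {p q : ℕ × ℕ} (hp1 : 1 ≤ p.1) (hq1 : 1 ≤ q.1)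
    (h : lkey e p = lkey e q) : p = q := by
  obtain ⟨a, b⟩ := p; obtain ⟨a', b'⟩ := q
  simp only [lkey] at h
  rw [toLex_inj, Prod.mk.injEq] at h
  simp only [lidx] at h
  obtain ⟨h1, h2⟩ := h
  simp only at hp1 hq1 h1 h2 ⊢
  subst h2
  simp only [Prod.mk.injEq, true_and] at *
  omega

lemma lkey_le_lidx_le {e : ℕ} {p q : ℕ × ℕ} (h : lkey e p ≤ lkey e q) :
    lidx e p ≤ lidx e q := by
  rcases Prod.Lex.le_iff.mp h with h' | h'
  · exact le_of_lt h'
  · exact le_of_eq h'.1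

lemma lkey_lt_of_lidx_lt {e : ℕ} {p q : ℕ × ℕ} (h : lidx e p < lidx e q) :
    lkey e p < lkey e q :=
  Prod.Lex.lt_iff.mpr (Or.inl h)

lemma Rlad_eq_ncard {e : ℕ} {l : ℕ → ℕ} (hfin : (cells l).Finite) (m : ℕ) :
    Rlad e l m = (cells l ∩ {p | lidx e p ≤ m}).ncard := by
  induction m with
  | zero =>
    have h1 : Rlad e l 0 = 0 := by simp [Rlad]
    have h2 : cells l ∩ {p | lidx e p ≤ 0} = ∅ := by
      ext p
      simp only [Set.mem_inter_iff, Set.mem_setOf_eq, Set.mem_empty_iff_false, iff_false]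
      rintro ⟨⟨hp1, hp2, _⟩, hle⟩
      simp only [lidx] at hle
      omega
    rw [h1, h2, Set.ncard_empty]
  | succ m ih =>
    have hstep : Rlad e l (m + 1) = Rlad e l m + (cells l ∩ ladder e (m + 1)).ncard := by
      simp only [Rlad]
      rw [Finset.sum_Icc_succ_top (by omega : 1 ≤ m + 1)]
    have hladder : cells l ∩ ladder e (m + 1) = cells l ∩ {p | lidx e p = m + 1} := by
      ext p
      simp only [Set.mem_inter_iff, Set.mem_setOf_eq]
      constructor
      · rintro ⟨hp, hlp⟩
        exact ⟨hp, (mem_ladder_iff_lidx hp.1 hp.2.1 (m + 1)).mp hlp⟩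
      · rintro ⟨hp, hlp⟩
        exact ⟨hp, (mem_ladder_iff_lidx hp.1 hp.2.1 (m + 1)).mpr hlp⟩
    have hunion : cells l ∩ {p | lidx e p ≤ m + 1} =
        (cells l ∩ {p | lidx e p ≤ m}) ∪ (cells l ∩ {p | lidx e p = m + 1}) := by
      ext p
      simp only [Set.mem_inter_iff, Set.mem_setOf_eq, Set.mem_union]
      constructor
      · rintro ⟨hp, hle⟩
        rcases Nat.lt_or_ge (lidx e p) (m + 1) with h | h
        · exact Or.inl ⟨hp, by omega⟩
        · exact Or.inr ⟨hp, by omega⟩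
      · rintro (⟨hp, h⟩ | ⟨hp, h⟩) <;> exact ⟨hp, by omega⟩
    have hdisj : Disjoint (cells l ∩ {p | lidx e p ≤ m}) (cells l ∩ {p | lidx e p = m + 1}) := by
      rw [Set.disjoint_left]
      rintro p ⟨_, h1⟩ ⟨_, h2⟩
      simp only [Set.mem_setOf_eq] at h1 h2
      omega
    rw [hstep, ih, hladder, hunion,
      Set.ncard_union_eq hdisj (hfin.subset Set.inter_subset_left)
        (hfin.subset Set.inter_subset_left)]

lemma res_eq_lidx {e : ℕ} (he : 2 ≤ e) {p : ℕ × ℕ} (hp1 : 1 ≤ p.1) (hp2 : 1 ≤ p.2) :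
    res e p = ((lidx e p - 1 : ℕ) : ZMod e) := by
  obtain ⟨a, b⟩ := p
  simp only at hp1 hp2
  obtain ⟨a', rfl⟩ := Nat.exists_eq_add_of_le hp1
  obtain ⟨b', rfl⟩ := Nat.exists_eq_add_of_le hp2
  obtain ⟨e', rfl⟩ := Nat.exists_eq_add_of_le he
  have hl : lidx (2 + e') (1 + a', 1 + b') - 1 = b' + a' * (1 + e') := by
    simp only [lidx]
    have h1 : 1 + a' - 1 = a' := by omega
    have h2 : 2 + e' - 1 = 1 + e' := by omega
    rw [h1, h2]
    omega
  rw [hl]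
  simp only [res]
  have h0 : ((2 + e' : ℕ) : ZMod (2 + e')) = 0 := ZMod.natCast_self _
  push_cast at h0 ⊢
  linear_combination (-(a' : ZMod (2 + e'))) * h0

/-- there exists a standard `λ`-tableau with residue sequence `j^λ`. -/
theorem exists_ladder_tableau
    (e d : ℕ) (he : 2 ≤ e) (l : ℕ → ℕ)
    (hl : IsPartitionOf l d) (hrestr : IsRestricted e l) :
    ∃ T : ℕ × ℕ → ℕ, IsStandardTableau (cells l) d T ∧
      ∀ p ∈ cells l, res e p = ladderWeight e l (T p) := by
  classical
  obtain ⟨hpf, hfin, hcard⟩ := hl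
  set S := cells l with hSdef
  set T : ℕ × ℕ → ℕ := fun p => (S ∩ {q | lkey e q ≤ lkey e p}).ncard with hT
  have hsub : ∀ p : ℕ × ℕ, S ∩ {q | lkey e q ≤ lkey e p} ⊆ S := fun _ => Set.inter_subset_left
  have hfin' : ∀ p : ℕ × ℕ, (S ∩ {q | lkey e q ≤ lkey e p}).Finite :=
    fun p => hfin.subset (hsub p)
  have hmem : ∀ p ∈ S, p ∈ S ∩ {q | lkey e q ≤ lkey e p} := fun p hp => ⟨hp, le_refl (lkey e p)⟩
  have hpos : ∀ p ∈ S, 1 ≤ T p := by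
    intro p hp
    have : (S ∩ {q | lkey e q ≤ lkey e p}).Nonempty := ⟨p, hmem p hp⟩
    exact (Set.ncard_pos (hfin' p)).mpr this
  have hled : ∀ p : ℕ × ℕ, T p ≤ d := by
    intro p
    rw [← hcard]
    exact Set.ncard_le_ncard (hsub p) hfin
  have hmono : ∀ p, ∀ q ∈ S, lkey e p < lkey e q → T p < T q := by
    intro p q hq hlt
    apply Set.ncard_lt_ncard _ (hfin' q)
    constructor
    · intro r ⟨hr, hr'⟩
      exact ⟨hr, le_trans hr' (le_of_lt hlt)⟩
    · intro hcon
      have h2 := (hcon (hmem q hq)).2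
      exact absurd (lt_of_lt_of_le hlt h2) (lt_irrefl _)
  have hinj : ∀ p ∈ S, ∀ q ∈ S, T p = T q → p = q := by
    intro p hp q hq hpq
    by_contra hne
    have hk : lkey e p ≠ lkey e q := by
      intro h
      exact hne (lkey_injOn hp.1 hq.1 h)
    rcases lt_or_gt_of_ne hk with h | h
    · exact absurd hpq (Nat.ne_of_lt (hmono p q hq h))
    · exact absurd hpq.symm (Nat.ne_of_lt (hmono q p hp h))
  have hsurj : ∀ s, 1 ≤ s → s ≤ d → ∃ p ∈ S, T p = s := by
    intro s hs1 hs2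
    have hcardF : hfin.toFinset.card = d := by
      rw [← hcard]
      exact (Set.ncard_eq_toFinset_card _ hfin).symm
    have himg : hfin.toFinset.image T = Finset.Icc 1 d := by
      apply Finset.eq_of_subset_of_card_le
      · intro x hx
        simp only [Finset.mem_image, Set.Finite.mem_toFinset] at hx
        obtain ⟨p, hp, rfl⟩ := hx
        exact Finset.mem_Icc.mpr ⟨hpos p hp, hled p⟩
      · rw [Finset.card_image_of_injOn, hcardF, Nat.card_Icc]
        · omega
        · intro p hp q hq
          exact hinj p (hfin.mem_toFinset.mp hp) q (hfin.mem_toFinset.mp hq)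
    have : s ∈ hfin.toFinset.image T := by
      rw [himg]; exact Finset.mem_Icc.mpr ⟨hs1, hs2⟩
    simp only [Finset.mem_image, Set.Finite.mem_toFinset] at this
    obtain ⟨p, hp, hps⟩ := this
    exact ⟨p, hp, hps⟩
  have hsInf : ∀ p ∈ S, sInf {m : ℕ | T p ≤ Rlad e l m} = lidx e p := by
    intro p hp
    have hmemInf : lidx e p ∈ {m : ℕ | T p ≤ Rlad e l m} := by
      simp only [Set.mem_setOf_eq]
      rw [Rlad_eq_ncard hfin]
      apply Set.ncard_le_ncard _ (hfin.subset Set.inter_subset_left)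
      intro q ⟨hq, hq'⟩
      exact ⟨hq, lkey_le_lidx_le hq'⟩
    apply le_antisymm
    · exact Nat.sInf_le hmemInf
    · apply le_csInf ⟨_, hmemInf⟩
      intro m hm
      by_contra hcon
      push_neg at hcon
      simp only [Set.mem_setOf_eq] at hm
      have hlt : Rlad e l m < T p := by
        rw [Rlad_eq_ncard hfin]
        have hss : cells l ∩ {q | lidx e q ≤ m} ⊆
            (S ∩ {q | lkey e q ≤ lkey e p}) \ {p} := by
          intro q ⟨hq, hq'⟩
          simp only [Set.mem_setOf_eq] at hq'
          refine ⟨⟨hq, le_of_lt (lkey_lt_of_lidx_lt (by omega))⟩, ?_⟩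
          simp only [Set.mem_singleton_iff]
          intro hqp
          subst hqp
          omega
        calc (cells l ∩ {q | lidx e q ≤ m}).ncard
            ≤ ((S ∩ {q | lkey e q ≤ lkey e p}) \ {p}).ncard :=
              Set.ncard_le_ncard hss (hfin' p).diff
          _ < T p := Set.ncard_diff_singleton_lt_of_mem (hmem p hp) (hfin' p)
      omega
  refine ⟨T, ⟨fun p hp => ⟨hpos p hp, hled p⟩, hinj, hsurj, ?_, ?_⟩, ?_⟩
  · intro a b hab hab'
    apply hmono _ _ hab'
    apply lkey_lt_of_lidx_lt
    simp only [lidx]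
    omega
  · intro a b hab hab'
    apply hmono _ _ hab'
    apply lkey_lt_of_lidx_lt
    have ha : 1 ≤ a := hab.1
    simp only [lidx]
    have h1 : a + 1 - 1 = a := by omega
    rw [h1]
    have : a - 1 < a := by omega
    have := (Nat.mul_lt_mul_right (by omega : 0 < e - 1)).mpr this
    omega
  · intro p hp
    simp only [ladderWeight]
    rw [hsInf p hp]
    exact res_eq_lidx he hp.1 hp.2.1

end KN
end

section
/- Let e ≥ 2 and let λ be an e-restricted partition of d. Then the number of standard λ-tableaux T whose residue sequence i^T equals the ladder weight j^λ is exactly ∏_{m=1}^{t_λ} r_m(λ)!. -/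
namespace KN

-- AUX

def lad (e : ℕ) (p : ℕ × ℕ) : ℕ := p.2 + (p.1 - 1) * (e - 1)

lemma lad_mk (e a b : ℕ) : lad e (a, b) = b + (a - 1) * (e - 1) := rfl

lemma mem_ladder_iff {e : ℕ} {p : ℕ × ℕ} (h1 : 1 ≤ p.1) (h2 : 1 ≤ p.2) {m : ℕ} :
    p ∈ ladder e m ↔ lad e p = m := by
  obtain ⟨a, b⟩ := p
  simp only [ladder, Set.mem_setOf_eq, lad_mk, Prod.mk.injEq] at *
  constructor
  · rintro ⟨k, hk, rfl, rfl⟩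
    have h1k : 1 + k - 1 = k := by omega
    rw [h1k]
    omega
  · rintro rfl
    exact ⟨a - 1, by omega, by omega, by omega⟩

lemma res_eq_lad {e : ℕ} (he : 2 ≤ e) {p : ℕ × ℕ} (h1 : 1 ≤ p.1) (h2 : 1 ≤ p.2) :
    res e p = ((lad e p - 1 : ℕ) : ZMod e) := by
  obtain ⟨a, b⟩ := p
  simp only [res, lad_mk]
  have h : b + (a - 1) * (e - 1) - 1 = (a - 1) * (e - 1) + (b - 1) := by omega
  rw [h, Nat.cast_add, Nat.cast_mul, Nat.cast_sub h1, Nat.cast_sub h2,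
    Nat.cast_sub (by omega : 1 ≤ e), Nat.cast_one, ZMod.natCast_self]
  ring


open Finset in
lemma count_blocks {gamma : Type*} [DecidableEq gamma] (F : Finset gamma) (f : gamma → ℕ) (t : ℕ)
    (hf : ∀ p ∈ F, 1 ≤ f p ∧ f p ≤ t)
    (block : ℕ → Finset ℕ)
    (hdisj : ∀ m m', m ≠ m' → Disjoint (block m) (block m'))
    (hsize : ∀ m, (block m).card = (F.filter (fun p => f p = m)).card) :
    {T : gamma → ℕ | (∀ p ∉ F, T p = 0) ∧ Set.InjOn T ↑F ∧ ∀ p ∈ F, T p ∈ block (f p)}.ncard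
      = ∏ m ∈ Finset.Icc 1 t, Nat.factorial ((F.filter (fun p => f p = m)).card) := by
  classical
  set B : Set (gamma → ℕ) :=
    {T : gamma → ℕ | (∀ p ∉ F, T p = 0) ∧ Set.InjOn T ↑F ∧ ∀ p ∈ F, T p ∈ block (f p)} with hB
  have E : B ≃ (∀ m : (Finset.Icc 1 t : Finset ℕ),
      ((F.filter (fun p => f p = (m : ℕ)) : Finset gamma) ↪ (block (m : ℕ) : Finset ℕ))) := by
    refine ⟨fun T m => ⟨fun p => ⟨T.1 p.1, by
        have hp := p.2
        rw [Finset.mem_filter] at hp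
        have := T.2.2.2 p.1 hp.1
        rwa [hp.2] at this⟩, by
        intro p q h
        rw [Subtype.mk.injEq] at h
        have hp := p.2; have hq := q.2
        rw [Finset.mem_filter] at hp hq
        exact Subtype.ext (T.2.2.1 hp.1 hq.1 h)⟩,
      fun g => ⟨fun p => if h : p ∈ F then
        (g ⟨f p, by simp only [Finset.mem_Icc]; exact hf p h⟩
          ⟨p, Finset.mem_filter.2 ⟨h, rfl⟩⟩ : ℕ) else 0, ?_, ?_, ?_⟩, ?_, ?_⟩
    · intro p hp; exact dif_neg hp
    · -- InjOn
      have helper : ∀ (m1 m2 : (Finset.Icc 1 t : Finset ℕ))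
          (x1 : (F.filter (fun p => f p = (m1 : ℕ)) : Finset gamma))
          (x2 : (F.filter (fun p => f p = (m2 : ℕ)) : Finset gamma)),
          (g m1 x1 : ℕ) = (g m2 x2 : ℕ) → x1.1 = x2.1 := by
        intro m1 m2 x1 x2 h
        have hm : m1 = m2 := by
          by_contra hne
          have h1 : ((g m1 x1 : ℕ)) ∈ block (m1 : ℕ) := (g m1 x1).2
          have h2 : ((g m2 x2 : ℕ)) ∈ block (m2 : ℕ) := (g m2 x2).2
          have hne' : (m1 : ℕ) ≠ (m2 : ℕ) := fun hc => hne (Subtype.ext hc)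
          exact (Finset.disjoint_left.1 (hdisj _ _ hne') h1 (h ▸ h2))
        subst hm
        have := (g m1).injective (Subtype.ext h)
        exact congrArg Subtype.val this
      intro p hp q hq h
      simp only [Finset.mem_coe] at hp hq
      simp only [dif_pos hp, dif_pos hq] at h
      exact helper _ _ _ _ h
    · intro p hp
      simp only [dif_pos hp]
      exact (g ⟨f p, _⟩ ⟨p, _⟩).2
    · -- left inverse
      intro T
      apply Subtype.ext
      funext p
      by_cases h : p ∈ F
      · simp only [dif_pos h]; rfl
      · simp only [dif_neg h]; exact (T.2.1 p h).symm
    · -- right inverse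
      intro g
      funext m
      apply Function.Embedding.ext
      intro x
      apply Subtype.ext
      have hx := x.2
      rw [Finset.mem_filter] at hx
      show (dite _ _ _ : ℕ) = _
      rw [dif_pos hx.1]
      have key : ∀ (m1 m2 : (Finset.Icc 1 t : Finset ℕ)) (h : m1 = m2)
          (x1 : (F.filter (fun p => f p = (m1 : ℕ)) : Finset gamma))
          (x2 : (F.filter (fun p => f p = (m2 : ℕ)) : Finset gamma)),
          x1.1 = x2.1 → (g m1 x1 : ℕ) = (g m2 x2 : ℕ) := by
        intro m1 m2 h x1 x2 hx
        subst h
        rw [Subtype.ext hx]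
      exact key _ m (Subtype.ext hx.2) _ x rfl
  have h1 : B.ncard = Nat.card B := (Nat.card_coe_set_eq B).symm
  rw [h1, Nat.card_congr E, Nat.card_pi]
  rw [← Finset.prod_coe_sort (Finset.Icc 1 t)]
  apply Finset.prod_congr rfl
  intro m _
  rw [Nat.card_eq_fintype_card, Fintype.card_embedding_eq, Fintype.card_coe,
    Fintype.card_coe, hsize, Nat.descFactorial_self]


/-- the number of standard `λ`-tableaux with residue sequence `j^λ`
equals `∏_m r_m(λ)!`. -/
theorem card_ladder_tableaux
    (e d : ℕ) (he : 2 ≤ e) (l : ℕ → ℕ)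
    (hl : IsPartitionOf l d) (hrestr : IsRestricted e l)
    (t : ℕ) (htmax : ∀ u, (cells l ∩ ladder e u).Nonempty → u ≤ t) :
    (LWTableaux e d l (cells l)).ncard =
      ∏ u ∈ Finset.Icc 1 t, Nat.factorial ((cells l ∩ ladder e u).ncard) := by
  classical
  obtain ⟨⟨hmono, -⟩, hfin, hcard⟩ := hl
  set F := hfin.toFinset with hFdef
  have hFS : (F : Set (ℕ × ℕ)) = cells l := hfin.coe_toFinset
  have hmemF : ∀ p : ℕ × ℕ, p ∈ F ↔ (1 ≤ p.1 ∧ 1 ≤ p.2 ∧ p.2 ≤ l p.1) := by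
    intro p
    rw [hFdef, Set.Finite.mem_toFinset]
    rfl
  have hmemS : ∀ p : ℕ × ℕ, p ∈ cells l ↔ p ∈ F := by
    intro p; rw [← hFS, Finset.mem_coe]
  have hFcard : F.card = d := by
    rw [hFdef, ← Set.ncard_eq_toFinset_card _ hfin]; exact hcard
  set r : ℕ → ℕ := fun m => (F.filter (fun p => lad e p = m)).card with hrdef
  set Rm : ℕ → ℕ := fun m => (F.filter (fun p => lad e p ≤ m)).card with hRmdef
  have hladpos : ∀ p ∈ F, 1 ≤ lad e p := by
    intro p hp
    have h := (hmemF p).1 hp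
    have : 1 ≤ p.2 := h.2.1
    simp only [lad]
    omega
  have hinter : ∀ m, cells l ∩ ladder e m = ↑(F.filter (fun p => lad e p = m)) := by
    intro m
    ext p
    simp only [Set.mem_inter_iff, Finset.coe_filter, Set.mem_setOf_eq]
    constructor
    · rintro ⟨hc, hlad⟩
      have hc' := (hmemS p).1 hc
      have h := (hmemF p).1 hc'
      exact ⟨hc', (mem_ladder_iff h.1 h.2.1).1 hlad⟩
    · rintro ⟨hpF, hlp⟩
      have h := (hmemF p).1 hpF
      exact ⟨(hmemS p).2 hpF, (mem_ladder_iff h.1 h.2.1).2 hlp⟩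
  have hrcard : ∀ m, (cells l ∩ ladder e m).ncard = r m := by
    intro m; rw [hinter m, Set.ncard_coe_finset]
  have hRR : ∀ m, Rlad e l m = Rm m := by
    intro m
    have h1 : Rm m = ∑ u ∈ Finset.Icc 1 m,
        ((F.filter (fun p => lad e p ≤ m)).filter (fun p => lad e p = u)).card := by
      apply Finset.card_eq_sum_card_fiberwise
      intro p hp
      rw [Finset.mem_coe, Finset.mem_filter] at hp
      rw [Finset.mem_coe, Finset.mem_Icc]
      exact ⟨hladpos p hp.1, hp.2⟩
    simp only [Rlad]
    rw [h1]
    refine Finset.sum_congr rfl (fun u hu => ?_)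
    rw [Finset.mem_Icc] at hu
    rw [hrcard u]
    show (F.filter (fun p => lad e p = u)).card = _
    congr 1
    rw [Finset.filter_filter]
    apply Finset.filter_congr
    intro p _
    constructor
    · intro h; exact ⟨by omega, h⟩
    · intro h; exact h.2
  have hladt : ∀ p ∈ F, lad e p ≤ t := by
    intro p hp
    have h := (hmemF p).1 hp
    apply htmax
    exact ⟨p, (hmemS p).2 hp, (mem_ladder_iff h.1 h.2.1).2 rfl⟩
  have hRmmono : Monotone Rm := by
    intro m m' hmm
    apply Finset.card_le_card
    intro q hq
    rw [Finset.mem_filter] at hq ⊢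
    exact ⟨hq.1, le_trans hq.2 hmm⟩
  have hd : Rm t = d := by
    have : F.filter (fun p => lad e p ≤ t) = F :=
      Finset.filter_true_of_mem hladt
    show (F.filter (fun p => lad e p ≤ t)).card = d
    rw [this, hFcard]
  have hRm0 : Rm 0 = 0 := by
    show (F.filter (fun p => lad e p ≤ 0)).card = 0
    rw [Finset.card_eq_zero, Finset.filter_eq_empty_iff]
    intro p hp
    have := hladpos p hp
    omega
  have hRstep : ∀ m, 1 ≤ m → Rm m = Rm (m - 1) + r m := by
    intro m hm
    have hun : F.filter (fun p => lad e p ≤ m) =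
        (F.filter (fun p => lad e p ≤ m - 1)) ∪ (F.filter (fun p => lad e p = m)) := by
      ext q
      simp only [Finset.mem_filter, Finset.mem_union]
      constructor
      · rintro ⟨h1, h2⟩
        by_cases h : lad e q = m
        · exact Or.inr ⟨h1, h⟩
        · exact Or.inl ⟨h1, by omega⟩
      · rintro (⟨h1, h2⟩ | ⟨h1, h2⟩)
        · exact ⟨h1, by omega⟩
        · exact ⟨h1, by omega⟩
    have hdisj : Disjoint (F.filter (fun p => lad e p ≤ m - 1))
        (F.filter (fun p => lad e p = m)) := by
      rw [Finset.disjoint_left]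
      intro q h1 h2
      rw [Finset.mem_filter] at h1 h2
      omega
    show (F.filter (fun p => lad e p ≤ m)).card = _
    rw [hun, Finset.card_union_of_disjoint hdisj]
  -- the M function
  set M : ℕ → ℕ := fun s => sInf {m : ℕ | s ≤ Rlad e l m} with hMdef
  have hLW : ∀ s, ladderWeight e l s = ((M s - 1 : ℕ) : ZMod e) := fun s => rfl
  have hMle : ∀ s m, s ≤ Rm m → M s ≤ m := by
    intro s m h
    apply Nat.sInf_le
    show s ≤ Rlad e l m
    rw [hRR]; exact h
  have hMmem : ∀ s, 1 ≤ s → s ≤ d → s ≤ Rm (M s) := by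
    intro s h1 h2
    have hne : (t : ℕ) ∈ {m : ℕ | s ≤ Rlad e l m} := by
      show s ≤ Rlad e l t
      rw [hRR, hd]; exact h2
    have := Nat.sInf_mem (Set.nonempty_of_mem hne)
    rw [← hRR]
    exact this
  have hM1 : ∀ s, 1 ≤ s → s ≤ d → 1 ≤ M s := by
    intro s h1 h2
    by_contra h
    have hM0 : M s = 0 := by omega
    have := hMmem s h1 h2
    rw [hM0, hRm0] at this
    omega
  have hMlt : ∀ s, 1 ≤ s → s ≤ d → Rm (M s - 1) < s := by
    intro s h1 h2
    by_contra h
    push_neg at h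
    have := hMle s (M s - 1) h
    have := hM1 s h1 h2
    omega
  -- the key set equality
  have hseteq : LWTableaux e d l (cells l) =
      {T : (ℕ × ℕ) → ℕ | (∀ p ∉ F, T p = 0) ∧ Set.InjOn T ↑F ∧
        ∀ p ∈ F, T p ∈ Finset.Ioc (Rm (lad e p - 1)) (Rm (lad e p))} := by
    ext T
    simp only [LWTableaux, Set.mem_setOf_eq]
    constructor
    · rintro ⟨⟨hbd, hinj, hsurj, hrow, hcol⟩, hzero, hres⟩
      have hTcard : ∀ k, k ≤ d → (F.filter (fun p => T p ≤ k)).card = k := by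
        intro k hk
        have hb : (F.filter (fun p => T p ≤ k)).card = (Finset.Icc 1 k).card := by
          apply Finset.card_bij (fun p _ => T p)
          · intro p hp
            rw [Finset.mem_filter] at hp
            have := hbd p ((hmemS p).2 hp.1)
            rw [Finset.mem_Icc]
            exact ⟨this.1, hp.2⟩
          · intro p hp q hq h
            rw [Finset.mem_filter] at hp hq
            exact hinj p ((hmemS p).2 hp.1) q ((hmemS q).2 hq.1) h
          · intro s hs
            rw [Finset.mem_Icc] at hs
            obtain ⟨p, hpS, hTp⟩ := hsurj s hs.1 (le_trans hs.2 hk)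
            exact ⟨p, Finset.mem_filter.2 ⟨(hmemS p).1 hpS, by omega⟩, hTp⟩
        rw [hb, Nat.card_Icc]
        omega
      have KEY : ∀ s, ∀ p, p ∈ F → T p = s → lad e p = M s := by
        intro s
        induction s using Nat.strong_induction_on with
        | _ s IH =>
        intro p hpF hTp
        have hpS : p ∈ cells l := (hmemS p).2 hpF
        have hcF := (hmemF p).1 hpF
        have hs1 : 1 ≤ s := hTp ▸ (hbd p hpS).1
        have hsd : s ≤ d := hTp ▸ (hbd p hpS).2
        have hm1 : 1 ≤ M s := hM1 s hs1 hsd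
        have hmem : s ≤ Rm (M s) := hMmem s hs1 hsd
        have hlt : Rm (M s - 1) < s := hMlt s hs1 hsd
        -- step: lad p ≥ M s
        have hsub : F.filter (fun q => T q ≤ Rm (M s - 1)) ⊆
            F.filter (fun q => lad e q ≤ M s - 1) := by
          intro q hq
          rw [Finset.mem_filter] at hq ⊢
          refine ⟨hq.1, ?_⟩
          have hq1 : 1 ≤ T q := (hbd q ((hmemS q).2 hq.1)).1
          have hql : lad e q = M (T q) := IH (T q) (by omega) q hq.1 rfl
          rw [hql]
          exact hMle (T q) (M s - 1) hq.2
        have hRd : Rm (M s - 1) ≤ d := by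
          have := Finset.card_filter_le F (fun p => lad e p ≤ M s - 1)
          show (F.filter (fun p => lad e p ≤ M s - 1)).card ≤ d
          omega
        have hcards : (F.filter (fun q => T q ≤ Rm (M s - 1))).card = Rm (M s - 1) :=
          hTcard _ hRd
        have heqf : F.filter (fun q => T q ≤ Rm (M s - 1)) =
            F.filter (fun q => lad e q ≤ M s - 1) := by
          apply Finset.eq_of_subset_of_card_le hsub
          rw [hcards]
        have hge : M s ≤ lad e p := by
          by_contra hge
          push_neg at hge
          have hpf : p ∈ F.filter (fun q => lad e q ≤ M s - 1) :=
            Finset.mem_filter.2 ⟨hpF, by omega⟩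
          rw [← heqf, Finset.mem_filter] at hpf
          omega
        -- congruence mod e
        have hres' : ((lad e p - 1 : ℕ) : ZMod e) = ((M s - 1 : ℕ) : ZMod e) := by
          have h0 := hres p hpS
          rw [res_eq_lad he hcF.1 hcF.2.1, hTp, hLW s] at h0
          exact h0
        have hcong : lad e p ≡ M s [MOD e] := by
          have hlp1 : 1 ≤ lad e p := hladpos p hpF
          have h1 : ((lad e p : ℕ) : ZMod e) = ((M s : ℕ) : ZMod e) := by
            have e1 : lad e p = (lad e p - 1) + 1 := by omega
            have e2 : M s = (M s - 1) + 1 := by omega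
            rw [e1, e2, Nat.cast_add, Nat.cast_add, hres']
          exact (ZMod.natCast_eq_natCast_iff _ _ _).1 h1
        have hdvd : e ∣ lad e p - M s := (Nat.modEq_iff_dvd' hge).1 hcong.symm
        obtain ⟨c, hc⟩ := hdvd
        rcases Nat.eq_zero_or_pos c with rfl | hc1
        · omega
        exfalso
        have hbig : M s + e ≤ lad e p := by
          have h5 : e ≤ e * c := Nat.le_mul_of_pos_right e hc1
          omega
        have aux : ∀ q, q ∈ F → T q < s → lad e q ≤ M s := by
          intro q hqF hq
          have hq1 : 1 ≤ T q := (hbd q ((hmemS q).2 hqF)).1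
          have hql : lad e q = M (T q) := IH (T q) hq q hqF rfl
          rw [hql]
          exact hMle (T q) (M s) (by omega)
        obtain ⟨a, b⟩ := p
        have ha1 : 1 ≤ a := hcF.1
        have hb1 : 1 ≤ b := hcF.2.1
        have hbl : b ≤ l a := hcF.2.2
        rw [lad_mk] at hbig
        by_cases hb : 2 ≤ b
        · have hqF : ((a, b - 1) : ℕ × ℕ) ∈ F := (hmemF _).2 ⟨ha1, by omega, by show b - 1 ≤ l a; omega⟩
          have hTlt : T (a, b - 1) < T (a, b) := by
            have h := hrow a (b - 1) ((hmemS _).2 hqF)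
              (by rw [show b - 1 + 1 = b from by omega]; exact hpS)
            rwa [show b - 1 + 1 = b from by omega] at h
          have hx := aux (a, b - 1) hqF (by omega)
          rw [lad_mk] at hx
          omega
        · have hb1' : b = 1 := by omega
          subst hb1'
          have ha2 : 2 ≤ a := by
            by_contra ha2
            have : a = 1 := by omega
            subst this
            simp at hbig
            omega
          have hla : 1 ≤ l (a - 1) := by
            have h := hmono (a - 1) (by omega)
            rw [show a - 1 + 1 = a from by omega] at h
            omega
          have hqF : ((a - 1, 1) : ℕ × ℕ) ∈ F := (hmemF _).2 ⟨by omega, le_rfl, hla⟩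
          have hTlt : T (a - 1, 1) < T (a, 1) := by
            have h := hcol (a - 1) 1 ((hmemS _).2 hqF)
              (by rw [show a - 1 + 1 = a from by omega]; exact hpS)
            rwa [show a - 1 + 1 = a from by omega] at h
          have hx := aux (a - 1, 1) hqF (by omega)
          rw [lad_mk] at hx
          have hXY : (a - 1) * (e - 1) = (a - 1 - 1) * (e - 1) + (e - 1) := by
            have h' : a - 1 = (a - 1 - 1) + 1 := by omega
            calc (a - 1) * (e - 1) = ((a - 1 - 1) + 1) * (e - 1) := by rw [← h']
              _ = (a - 1 - 1) * (e - 1) + (e - 1) := by rw [add_mul, one_mul]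
          omega
      refine ⟨fun p hp => hzero p (fun hc => hp ((hmemS p).1 hc)), ?_, ?_⟩
      · intro p hp q hq h
        rw [Finset.mem_coe] at hp hq
        exact hinj p ((hmemS p).2 hp) q ((hmemS q).2 hq) h
      · intro p hp
        have hpS := (hmemS p).2 hp
        have hkey := KEY (T p) p hp rfl
        have h1 := (hbd p hpS).1
        have h2 := (hbd p hpS).2
        rw [Finset.mem_Ioc, hkey]
        exact ⟨hMlt (T p) h1 h2, hMmem (T p) h1 h2⟩
    · rintro ⟨hzero, hinj, hblock⟩
      have hbd' : ∀ p ∈ F, 1 ≤ T p ∧ T p ≤ d := by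
        intro p hp
        have h := hblock p hp
        rw [Finset.mem_Ioc] at h
        have h2 : Rm (lad e p) ≤ d := by
          rw [← hd]; exact hRmmono (hladt p hp)
        exact ⟨by omega, by omega⟩
      have hMeq : ∀ p ∈ F, M (T p) = lad e p := by
        intro p hp
        have h := hblock p hp
        rw [Finset.mem_Ioc] at h
        have hle : M (T p) ≤ lad e p := hMle (T p) _ h.2
        by_contra hne
        have hlt2 : M (T p) ≤ lad e p - 1 := by
          have := hladpos p hp
          omega
        have h1 := (hbd' p hp).1
        have h2 := (hbd' p hp).2
        have h3 := hMmem (T p) h1 h2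
        have h4 := hRmmono hlt2
        omega
      refine ⟨⟨?_, ?_, ?_, ?_, ?_⟩, ?_, ?_⟩
      · intro p hp
        exact hbd' p ((hmemS p).1 hp)
      · intro p hp q hq h
        exact hinj (Finset.mem_coe.2 ((hmemS p).1 hp)) (Finset.mem_coe.2 ((hmemS q).1 hq)) h
      · intro s hs1 hs2
        have hsurj := Finset.surj_on_of_inj_on_of_card_le (s := F) (t := Finset.Icc 1 d)
          (fun p _ => T p)
          (fun p hp => Finset.mem_Icc.2 ⟨(hbd' p hp).1, (hbd' p hp).2⟩)
          (fun p q hp hq h => hinj (Finset.mem_coe.2 hp) (Finset.mem_coe.2 hq) h)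
          (by rw [Nat.card_Icc, hFcard]; omega)
        obtain ⟨p, hp, hps⟩ := hsurj s (Finset.mem_Icc.2 ⟨hs1, hs2⟩)
        exact ⟨p, (hmemS p).2 hp, hps.symm⟩
      · intro a b h1 h2
        have hF1 : ((a, b) : ℕ × ℕ) ∈ F := (hmemS _).1 h1
        have hF2 : ((a, b + 1) : ℕ × ℕ) ∈ F := (hmemS _).1 h2
        have hbk1 := hblock _ hF1
        have hbk2 := hblock _ hF2
        rw [Finset.mem_Ioc] at hbk1 hbk2
        have hlads : lad e (a, b + 1) = lad e (a, b) + 1 := by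
          rw [lad_mk, lad_mk]
          omega
        have hmid : Rm (lad e (a, b)) ≤ Rm (lad e (a, b + 1) - 1) := by
          apply hRmmono
          omega
        omega
      · intro a b h1 h2
        have hF1 : ((a, b) : ℕ × ℕ) ∈ F := (hmemS _).1 h1
        have hF2 : ((a + 1, b) : ℕ × ℕ) ∈ F := (hmemS _).1 h2
        have hbk1 := hblock _ hF1
        have hbk2 := hblock _ hF2
        rw [Finset.mem_Ioc] at hbk1 hbk2
        have hlads : lad e (a, b) + 1 ≤ lad e (a + 1, b) := by
          have ha : 1 ≤ a := ((hmemF _).1 hF1).1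
          have hXY : (a + 1 - 1) * (e - 1) = (a - 1) * (e - 1) + (e - 1) := by
            have h' : a + 1 - 1 = (a - 1) + 1 := by omega
            rw [h', add_mul, one_mul]
          rw [lad_mk, lad_mk]
          omega
        have hmid : Rm (lad e (a, b)) ≤ Rm (lad e (a + 1, b) - 1) := by
          apply hRmmono
          omega
        omega
      · intro p hp
        exact hzero p (fun hc => hp ((hmemS p).2 hc))
      · intro p hp
        have hpF := (hmemS p).1 hp
        have hcF := (hmemF p).1 hpF
        rw [res_eq_lad he hcF.1 hcF.2.1, hLW, hMeq p hpF]
  -- finish by counting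
  rw [hseteq]
  rw [count_blocks F (lad e) t (fun p hp => ⟨hladpos p hp, hladt p hp⟩)
    (fun m => Finset.Ioc (Rm (m - 1)) (Rm m)) ?_ ?_]
  · refine Finset.prod_congr rfl (fun u _ => ?_)
    rw [hrcard u]
  · -- disjointness
    intro m m' hne
    rw [Finset.disjoint_left]
    intro x hx hx'
    rw [Finset.mem_Ioc] at hx hx'
    rcases Nat.lt_or_ge m m' with h | h
    · have : Rm m ≤ Rm (m' - 1) := hRmmono (by omega)
      omega
    · have h' : m' < m := by omega
      have : Rm m' ≤ Rm (m - 1) := hRmmono (by omega)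
      omega
  · -- sizes
    intro m
    rw [Nat.card_Ioc]
    rcases Nat.eq_zero_or_pos m with rfl | hm
    · show Rm 0 - Rm (0 - 1) = _
      have : F.filter (fun p => lad e p = 0) = ∅ := by
        rw [Finset.filter_eq_empty_iff]
        intro p hp
        have := hladpos p hp
        omega
      rw [this]
      simp
    · have := hRstep m hm
      show Rm m - Rm (m - 1) = r m
      omega

end KN
end
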